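/- Let A be a 2×2 matrix with integer entries. If A^n is a diagonal matrix for some n ≥ 1, then A^k is a diagonal matrix for some k ∈ {1,2,3,4,6}. -/

import Mathlib

/-- The Lucas-type sequence `u 0 = 0`, `u 1 = 1`, `u (m+2) = t * u (m+1) - d * u m`. -/
def uSeq (t d : ℤ) : ℕ → ℤ
  | 0 => 0
  | 1 => 1
  | (m+2) => t * uSeq t d (m+1) - d * uSeq t d m

lemma uSeq_rec (t d : ℤ) (k : ℕ) :
    uSeq t d (k+2) = t * uSeq t d (k+1) - d * uSeq t d k := rfl

lemma seq_eq {R : Type*} [CommRing R] (t d : R) (f g : ℕ → R)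
    (hf : ∀ m, f (m+2) = t * f (m+1) - d * f m)
    (hg : ∀ m, g (m+2) = t * g (m+1) - d * g m)
    (h0 : f 0 = g 0) (h1 : f 1 = g 1) : ∀ m, f m = g m := by
  intro m
  induction m using Nat.twoStepInduction with
  | zero => exact h0
  | one => exact h1
  | more m ih1 ih2 => rw [hf, hg, ih2, ih1]

lemma uSeq_two (t d : ℤ) : uSeq t d 2 = t := by simp [uSeq]

lemma uSeq_three (t d : ℤ) : uSeq t d 3 = t^2 - d := by
  simp only [show (3:ℕ)=1+2 from rfl, uSeq]; ring

lemma uSeq_four (t d : ℤ) : uSeq t d 4 = t^3 - 2*t*d := by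
  simp only [show (4:ℕ)=2+2 from rfl, show (3:ℕ)=1+2 from rfl, uSeq]; ring

lemma uSeq_six (t d : ℤ) : uSeq t d 6 = t^5 - 4*t^3*d + 3*t*d^2 := by
  simp only [show (6:ℕ)=4+2 from rfl, show (5:ℕ)=3+2 from rfl, show (4:ℕ)=2+2 from rfl,
    show (3:ℕ)=1+2 from rfl, uSeq]; ring

/-- If the Lucas sequence vanishes at some positive index, it vanishes at 2, 3, 4 or 6. -/
lemma lucas_key (t d : ℤ) (n : ℕ) (hn : 1 ≤ n) (h : uSeq t d n = 0) :
    uSeq t d 2 = 0 ∨ uSeq t d 3 = 0 ∨ uSeq t d 4 = 0 ∨ uSeq t d 6 = 0 := by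
  obtain _ | _ | n := n
  · omega
  · simp [uSeq] at h
  -- now the index is n + 2
  by_cases hd0 : d = 0
  · -- here uSeq t 0 (m+1) = t ^ m
    subst hd0
    have hp : ∀ m, uSeq t 0 (m+1) = t^m := by
      intro m
      induction m with
      | zero => simp [uSeq]
      | succ m ih =>
        rw [show uSeq t 0 (m+2) = t * uSeq t 0 (m+1) - 0 * uSeq t 0 m from rfl, ih]; ring
    have : t^(n+1) = 0 := by rw [← hp]; exact h
    have ht : t = 0 := by
      exact pow_eq_zero_iff (by omega) |>.mp this
    left; rw [uSeq_two, ht]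
  by_cases hdisc : t^2 = 4*d
  · -- double root case: 2^m * u (m+1) = (m+1) * t^m
    have hp : ∀ m : ℕ, 2^m * uSeq t d (m+1) = ((m:ℤ)+1) * t^m := by
      intro m
      induction m using Nat.twoStepInduction with
      | zero => simp [uSeq]
      | one => simp [uSeq]
      | more m ih1 ih2 =>
        rw [show uSeq t d (m+2+1) = t * uSeq t d (m+2) - d * uSeq t d (m+1) from rfl]
        push_cast
        push_cast at ih1 ih2
        linear_combination (2*t) * ih2 - (4*d) * ih1 + ((m:ℤ)+1) * t^m * hdisc
    have h0 : ((n:ℤ)+1+1) * t^(n+1) = 0 := by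
      have := hp (n+1); rw [h, mul_zero] at this; push_cast at this; linarith
    have ht : t = 0 := by
      have h1 : t^(n+1) = 0 := by
        rcases mul_eq_zero.mp h0 with h' | h'
        · exfalso; have : (0:ℤ) < (n:ℤ)+1+1 := by positivity
          omega
        · exact h'
      exact pow_eq_zero_iff (by omega) |>.mp h1
    left; rw [uSeq_two, ht]
  -- main case: distinct roots, nonzero determinant
  obtain ⟨s, hs⟩ := IsAlgClosed.exists_pow_nat_eq ((t:ℂ)^2 - 4*(d:ℂ)) (n := 2) (by norm_num)
  set α : ℂ := ((t:ℂ) + s)/2 with hα_def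
  set β : ℂ := ((t:ℂ) - s)/2 with hβ_def
  have hsum : α + β = (t:ℂ) := by rw [hα_def, hβ_def]; ring
  have hprod : α * β = (d:ℂ) := by rw [hα_def, hβ_def]; linear_combination (-(1:ℂ)/4) * hs
  have hdiff : α - β = s := by rw [hα_def, hβ_def]; ring
  have hα : α^2 = (t:ℂ)*α - (d:ℂ) := by linear_combination α * hsum - hprod
  have hβ : β^2 = (t:ℂ)*β - (d:ℂ) := by linear_combination β * hsum - hprod
  have hU : ∀ m, (α - β) * ((uSeq t d m : ℤ) : ℂ) = α^m - β^m := by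
    refine seq_eq (t:ℂ) (d:ℂ) _ _ (fun m => ?_) (fun m => ?_) (by simp [uSeq]) (by simp [uSeq])
    · rw [uSeq_rec]; push_cast; ring
    · linear_combination α^m * hα - β^m * hβ
  have hroot : α^(n+2) = β^(n+2) := by
    have h2 := hU (n+2)
    rw [h, Int.cast_zero, mul_zero] at h2
    exact sub_eq_zero.mp h2.symm
  have hdC : (d:ℂ) ≠ 0 := Int.cast_ne_zero.mpr hd0
  have hβ0 : β ≠ 0 := by
    intro h0; exact hdC (by rw [← hprod, h0, mul_zero])
  have hα0 : α ≠ 0 := by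
    intro h0; exact hdC (by rw [← hprod, h0, zero_mul])
  set ζ : ℂ := α / β with hζ_def
  have hζn : ζ ^ (n+2) = 1 := by
    rw [hζ_def, div_pow, hroot, div_self (pow_ne_zero _ hβ0)]
  have hint : IsIntegral ℤ ζ := by
    refine IsIntegral.of_pow (n := n+2) (by omega) ?_
    rw [hζn]; exact isIntegral_one
  have hinv : ζ⁻¹ = ζ^(n+1) := by
    have hmul : ζ * ζ^(n+1) = 1 := by rw [← pow_succ']; exact hζn
    exact inv_eq_of_mul_eq_one_right hmul
  have hint2 : IsIntegral ℤ (ζ + ζ⁻¹) := by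
    rw [hinv]; exact hint.add (hint.pow _)
  have key : (ζ + ζ⁻¹) * (d:ℂ) = (t:ℂ)^2 - 2*(d:ℂ) := by
    have hinv2 : ζ⁻¹ = β / α := by rw [hζ_def, inv_div]
    rw [hζ_def, hinv2, ← hprod]
    field_simp
    linear_combination (α + β + (t:ℂ)) * hsum
  have hdQ : ((d:ℤ):ℚ) ≠ 0 := Int.cast_ne_zero.mpr hd0
  have hq : (((((t^2 - 2*d : ℤ):ℚ)) / ((d:ℤ):ℚ) : ℚ) : ℂ) = ζ + ζ⁻¹ := by
    push_cast
    rw [div_eq_iff hdC]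
    exact key.symm
  have hintq : IsIntegral ℤ ((((t^2 - 2*d : ℤ):ℚ)) / ((d:ℤ):ℚ) : ℚ) := by
    rw [← isIntegral_algHom_iff (Rat.castHom ℂ).toIntAlgHom Rat.cast_injective]
    show IsIntegral ℤ (((((t^2 - 2*d : ℤ):ℚ)) / ((d:ℤ):ℚ) : ℚ) : ℂ)
    rw [hq]; exact hint2
  obtain ⟨c, hc⟩ := IsIntegrallyClosed.isIntegral_iff.mp hintq
  have hcd : c * d = t^2 - 2*d := by
    rw [eq_div_iff hdQ] at hc
    simp only [algebraMap_int_eq, eq_intCast] at hc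
    exact_mod_cast hc
  -- bound |c| ≤ 2
  have hcC : ((c:ℤ):ℂ) = ζ + ζ⁻¹ := by
    have h1 : ((c:ℤ):ℂ) * (d:ℂ) = (t:ℂ)^2 - 2*(d:ℂ) := by exact_mod_cast congrArg (Int.cast : ℤ → ℂ) hcd
    exact mul_right_cancel₀ hdC (h1.trans key.symm)
  have habs : ‖ζ‖ = 1 := by
    have h1 : ‖ζ‖^(n+2) = 1 := by rw [← norm_pow, hζn, norm_one]
    rcases pow_eq_one_iff_cases.mp h1 with h' | h' | h'
    · omega
    · exact h'
    · nlinarith [norm_nonneg ζ, h'.1]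
  have hble : |(c:ℝ)| ≤ 2 := by
    have h1 : ‖((c:ℤ):ℂ)‖ ≤ 2 := by
      rw [hcC]
      calc ‖ζ + ζ⁻¹‖ ≤ ‖ζ‖ + ‖ζ⁻¹‖ := norm_add_le _ _
        _ = 2 := by rw [norm_inv, habs]; norm_num
    rwa [Complex.norm_intCast] at h1
  obtain ⟨hl, hr⟩ := abs_le.mp hble
  have hcl : (-2:ℤ) ≤ c := by exact_mod_cast hl
  have hcr : c ≤ (2:ℤ) := by exact_mod_cast hr
  interval_cases c
  · -- c = -2 : t = 0
    have ht : t = 0 := by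
      have : t^2 = 0 := by linarith [hcd]
      exact pow_eq_zero_iff (by omega) |>.mp this
    left; rw [uSeq_two, ht]
  · -- c = -1 : t^2 = d
    right; left; rw [uSeq_three]; linarith [hcd]
  · -- c = 0 : t^2 = 2d
    right; right; left; rw [uSeq_four]
    have h2 : t^2 = 2*d := by linarith [hcd]
    linear_combination t * h2
  · -- c = 1 : t^2 = 3d
    right; right; right; rw [uSeq_six]
    have h3 : t^2 = 3*d := by linarith [hcd]
    linear_combination (t^3 - t*d) * h3
  · -- c = 2 : t^2 = 4d, contradiction
    exact absurd (by linarith [hcd]) hdisc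

lemma entry_eq (A : Matrix (Fin 2) (Fin 2) ℤ) (i j : Fin 2) (hij : i ≠ j) (m : ℕ) :
    (A ^ m) i j = uSeq (A 0 0 + A 1 1) (A 0 0 * A 1 1 - A 0 1 * A 1 0) m * A i j := by
  have hCH : A * A = (A 0 0 + A 1 1) • A -
      (A 0 0 * A 1 1 - A 0 1 * A 1 0) • (1 : Matrix (Fin 2) (Fin 2) ℤ) := by
    ext i' j'
    simp only [Matrix.mul_apply, Fin.sum_univ_two, Matrix.sub_apply, Matrix.smul_apply,
      Matrix.one_apply, smul_eq_mul]
    fin_cases i' <;> fin_cases j' <;> simp <;> ring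
  have hpow : ∀ k : ℕ, A^(k+2) = (A 0 0 + A 1 1) • A^(k+1) -
      (A 0 0 * A 1 1 - A 0 1 * A 1 0) • A^k := by
    intro k
    calc A^(k+2) = A^k * (A * A) := by rw [pow_add, sq]
      _ = A^k * ((A 0 0 + A 1 1) • A -
            (A 0 0 * A 1 1 - A 0 1 * A 1 0) • (1 : Matrix (Fin 2) (Fin 2) ℤ)) := by rw [hCH]
      _ = (A 0 0 + A 1 1) • (A^k * A) - (A 0 0 * A 1 1 - A 0 1 * A 1 0) • A^k := by
          rw [Matrix.mul_sub, Matrix.mul_smul, Matrix.mul_smul, Matrix.mul_one]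
      _ = (A 0 0 + A 1 1) • A^(k+1) - (A 0 0 * A 1 1 - A 0 1 * A 1 0) • A^k := by
          rw [← pow_succ]
  refine seq_eq (A 0 0 + A 1 1) (A 0 0 * A 1 1 - A 0 1 * A 1 0)
    (fun k => (A^k) i j) (fun k => uSeq (A 0 0 + A 1 1) (A 0 0 * A 1 1 - A 0 1 * A 1 0) k * A i j)
    (fun k => ?_) (fun k => ?_) ?_ ?_ m
  · show (A^(k+2)) i j = _
    rw [hpow k]
    simp only [Matrix.sub_apply, Matrix.smul_apply, smul_eq_mul]
  · show uSeq _ _ (k+2) * A i j = _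
    rw [uSeq_rec]; ring
  · simp [Matrix.one_apply_ne hij, uSeq]
  · simp [uSeq]

/-- If a power `A^n` (n ≥ 1) of a 2×2 integer matrix is diagonal, then `A^k` is
diagonal for some `k ∈ {1,2,3,4,6}`. -/
theorem stmt_0 (A : Matrix (Fin 2) (Fin 2) ℤ) (n : ℕ) (hn : 1 ≤ n)
    (h : (A ^ n).IsDiag) :
    ∃ k ∈ ({1, 2, 3, 4, 6} : Finset ℕ), (A ^ k).IsDiag := by
  by_cases hA : A.IsDiag
  · exact ⟨1, by decide, by simpa using hA⟩
  · have hex : ∃ i j, i ≠ j ∧ A i j ≠ 0 := by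
      by_contra hcon
      push_neg at hcon
      exact hA (fun i j hij => hcon i j hij)
    obtain ⟨i, j, hij, hne⟩ := hex
    set t : ℤ := A 0 0 + A 1 1
    set d : ℤ := A 0 0 * A 1 1 - A 0 1 * A 1 0
    have hzero : uSeq t d n * A i j = 0 := by
      rw [← entry_eq A i j hij n]; exact h hij
    have hun : uSeq t d n = 0 := by
      rcases mul_eq_zero.mp hzero with h' | h'
      · exact h'
      · exact absurd h' hne
    have hdiag : ∀ k : ℕ, uSeq t d k = 0 → (A ^ k).IsDiag := by
      intro k hk i' j' hij'
      rw [entry_eq A i' j' hij' k, hk, zero_mul]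
    rcases lucas_key t d n hn hun with h' | h' | h' | h'
    · exact ⟨2, by decide, hdiag 2 h'⟩
    · exact ⟨3, by decide, hdiag 3 h'⟩
    · exact ⟨4, by decide, hdiag 4 h'⟩
    · exact ⟨6, by decide, hdiag 6 h'⟩
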